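/- Let A and B be n×n complex matrices such that j(A - A*) is positive semidefinite and j(B - B*) is positive definite (where A* denotes conjugate transpose). Then det(I - AB) ≠ 0. -/

import Mathlib

open Matrix
open scoped ComplexOrder

lemma aux_conj {n : Type*} [Fintype n] (M : Matrix n n ℂ) (v : n → ℂ) :
    star v ⬝ᵥ Mᴴ *ᵥ v = star (star v ⬝ᵥ M *ᵥ v) := by
  rw [star_dotProduct, star_mulVec, conjTranspose_conjTranspose, ← dotProduct_mulVec]

/-- If j(A - A*) is positive semidefinite and j(B - B*) is positive definite
for complex n×n matrices A, B, then det(I - AB) ≠ 0. -/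
theorem stmt_0 {n : Type*} [Fintype n] [DecidableEq n]
    (A B : Matrix n n ℂ)
    (hA : (Complex.I • (A - Aᴴ)).PosSemidef)
    (hB : (Complex.I • (B - Bᴴ)).PosDef) :
    (1 - A * B).det ≠ 0 := by
  intro hdet
  obtain ⟨x, hx, hxv⟩ := (Matrix.exists_mulVec_eq_zero_iff).2 hdet
  have hAB : A *ᵥ (B *ᵥ x) = x := by
    rw [sub_mulVec, one_mulVec, sub_eq_zero] at hxv
    rw [mulVec_mulVec, ← hxv]
  set y := B *ᵥ x with hy
  -- quantity for A
  have hA' := hA.dotProduct_mulVec_nonneg y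
  have hB' := hB.dotProduct_mulVec_pos hx
  set a := star y ⬝ᵥ A *ᵥ y with ha
  set b := star x ⬝ᵥ B *ᵥ x with hb
  have hAq : star y ⬝ᵥ (Complex.I • (A - Aᴴ)) *ᵥ y = Complex.I * (a - star a) := by
    rw [smul_mulVec, dotProduct_smul, sub_mulVec, dotProduct_sub, aux_conj]
    simp [smul_eq_mul, ha]
  have hBq : star x ⬝ᵥ (Complex.I • (B - Bᴴ)) *ᵥ x = Complex.I * (b - star b) := by
    rw [smul_mulVec, dotProduct_smul, sub_mulVec, dotProduct_sub, aux_conj]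
    simp [smul_eq_mul, hb]
  rw [hAq] at hA'
  rw [hBq] at hB'
  -- a = star b
  have hab : a = star b := by
    calc a = star y ⬝ᵥ x := by rw [ha, hAB]
    _ = star (star x ⬝ᵥ y) := star_dotProduct _ _
    _ = star b := by rw [hb]
  have h1 : a.im ≤ 0 := by
    have := hA'.1  -- real part
    rw [Complex.zero_re] at this
    simp [Complex.mul_re, Complex.sub_im, Complex.sub_re] at this
    -- re (I * (a - conj a)) = -(a.im - (star a).im) = -(2 a.im)
    simpa [Complex.star_def, Complex.conj_im, Complex.conj_re] using this
  have h2 : b.im < 0 := by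
    have := hB'
    rw [Complex.lt_def] at this
    have hre := this.1
    rw [Complex.zero_re] at hre
    simpa [Complex.mul_re, Complex.sub_im, Complex.sub_re, Complex.star_def,
      Complex.conj_im, Complex.conj_re] using hre
  have : a.im = -b.im := by rw [hab]; simp [Complex.star_def]
  linarith
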